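/- Strong law for self-normalized importance sampling over a mixture: if for each k = 1..K, (X^{(k,l)})_{l≥1} are i.i.d. from density p_k, and h, p₁,...,p_K are positive measurable functions with each ∫ (λ_k h / ∑_{k'} λ_{k'} p_{k'}/c_{k'}) p_k dμ finite, then (1/L) ∑_{k,l} h(X^{(k,l)}) / (∑_{k'} (L_{k'}/L)(1/c_{k'}) p_{k'}(X^{(k,l)}))) converges almost surely, as all L_k → ∞ with L_k/L → λ_k, to ∑_k λ_k ∫ h(x)/(∑_{k'} λ_{k'} p_{k'}(x)/c_{k'}) p_k(x) dμ(x). -/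

import Mathlib

open MeasureTheory ProbabilityTheory Filter

lemma aux_tendsto_of_rel {S T : ℕ → ℝ} {A : ℝ} (hT : Tendsto T atTop (nhds A))
    (hb : ∀ ε : ℝ, 0 < ε → ∀ᶠ n in atTop, |S n - T n| ≤ ε * |T n|) :
    Tendsto S atTop (nhds A) := by
  have h0 : Tendsto (fun n => S n - T n) atTop (nhds 0) := by
    rw [NormedAddCommGroup.tendsto_nhds_zero]
    intro ε hε
    have hA : ∀ᶠ n in atTop, |T n| < |A| + 1 :=
      (hT.abs).eventually_lt_const (lt_add_one _)
    have hε' : 0 < ε / (2 * (|A| + 1)) := by positivity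
    filter_upwards [hb _ hε', hA] with n h1 h2
    calc ‖S n - T n‖ = |S n - T n| := rfl
      _ ≤ ε / (2 * (|A| + 1)) * |T n| := h1
      _ ≤ ε / (2 * (|A| + 1)) * (|A| + 1) := by
          apply mul_le_mul_of_nonneg_left h2.le hε'.le
      _ < ε := by
          rw [div_mul_eq_mul_div, mul_comm 2 (|A|+1), ← div_div, mul_div_assoc]
          have : (0:ℝ) < |A| + 1 := by positivity
          rw [div_self this.ne', mul_one]
          linarith
  have := h0.add hT
  simpa using this

theorem slln_mixture_importance_sampling
    {X : Type*} [MeasurableSpace X] (μ : Measure X) [SigmaFinite μ]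
    {K : ℕ} (p : Fin K → X → ℝ) (hp_meas : ∀ k, Measurable (p k))
    (hp_pos : ∀ k x, 0 < p k x)
    (hp_dens : ∀ k, ∫ x, p k x ∂μ = 1)
    (c : Fin K → ℝ) (hc : ∀ k, 0 < c k)
    (lam : Fin K → ℝ) (hlam : ∀ k, 0 < lam k ∧ lam k < 1)
    (hlam_sum : ∑ k, lam k = 1)
    (h : X → ℝ) (hh_meas : Measurable h) (hh_nonneg : ∀ x, 0 ≤ h x)
    (hint : ∀ k, Integrable
      (fun x => lam k * h x / (∑ k', lam k' * p k' x / c k') * p k x) μ)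
    {Ω : Type*} [MeasureSpace Ω] [IsProbabilityMeasure (ℙ : Measure Ω)]
    (Xs : Fin K → ℕ → Ω → X)
    (hXmeas : ∀ k l, Measurable (Xs k l))
    (hindep : iIndepFun
      (fun (kl : Fin K × ℕ) ω => Xs kl.1 kl.2 ω) ℙ)
    (hlaw : ∀ k l, Measure.map (Xs k l) ℙ =
      μ.withDensity (fun x => ENNReal.ofReal (p k x)))
    (Lk : Fin K → ℕ → ℕ) (Ltot : ℕ → ℕ)
    (hLtot : ∀ n, Ltot n = ∑ k, Lk k n)
    (hLk_top : ∀ k, Tendsto (fun n => Lk k n) atTop atTop)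
    (hLk_ratio : ∀ k, Tendsto (fun n => (Lk k n : ℝ) / (Ltot n : ℝ)) atTop (nhds (lam k))) :
    ∀ᵐ ω ∂(ℙ : Measure Ω),
      Tendsto
        (fun n => (1 / (Ltot n : ℝ)) *
          ∑ k, ∑ l ∈ Finset.range (Lk k n),
            h (Xs k l ω) /
              (∑ k', ((Lk k' n : ℝ) / (Ltot n : ℝ)) * (1 / c k') * p k' (Xs k l ω)))
        atTop
        (nhds (∑ k, lam k *
          ∫ x, h x / (∑ k', lam k' * p k' x / c k') * p k x ∂μ)) := by
  classical
  -- K positive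
  have hK : 0 < K := by
    rcases Nat.eq_zero_or_pos K with hK0 | hK0
    · exfalso; subst hK0; simp at hlam_sum
    · exact hK0
  haveI : Nonempty (Fin K) := Fin.pos_iff_nonempty.mp hK
  set D : X → ℝ := fun x => ∑ k', lam k' * p k' x / c k' with hDdef
  have hDpos : ∀ x, 0 < D x := fun x =>
    Finset.sum_pos (fun k _ => div_pos (mul_pos (hlam k).1 (hp_pos k x)) (hc k))
      Finset.univ_nonempty
  have hDmeas : Measurable D := by
    apply Finset.measurable_sum
    intro k _
    exact ((hp_meas k).const_mul (lam k)).div_const (c k)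
  set g : X → ℝ := fun x => h x / D x with hgdef
  have hgmeas : Measurable g := hh_meas.div hDmeas
  have hgnonneg : ∀ x, 0 ≤ g x := fun x => div_nonneg (hh_nonneg x) (hDpos x).le
  -- integrability of g * p k
  have Igp : ∀ k, Integrable (fun x => g x * p k x) μ := by
    intro k
    have h1 := (hint k).const_mul (lam k)⁻¹
    have h2 : (fun x => (lam k)⁻¹ * (lam k * h x / D x * p k x))
        = fun x => g x * p k x := by
      funext x
      have hne : lam k ≠ 0 := (hlam k).1.ne'
      have : (lam k)⁻¹ * (lam k * h x / D x * p k x)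
          = ((lam k)⁻¹ * lam k) * (h x / D x * p k x) := by ring
      rw [this, inv_mul_cancel₀ hne, one_mul]
    rwa [h2] at h1
  -- SLLN per component
  have key : ∀ k : Fin K, ∀ᵐ ω ∂(ℙ : Measure Ω),
      Tendsto (fun m : ℕ => (m : ℝ)⁻¹ * ∑ l ∈ Finset.range m, g (Xs k l ω))
        atTop (nhds (∫ x, g x * p k x ∂μ)) := by
    intro k
    have hident : ∀ l, IdentDistrib (fun ω => g (Xs k l ω)) (fun ω => g (Xs k 0 ω)) ℙ ℙ := by
      intro l
      have h1 : IdentDistrib (Xs k l) (Xs k 0) ℙ ℙ :=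
        ⟨(hXmeas k l).aemeasurable, (hXmeas k 0).aemeasurable, by rw [hlaw, hlaw]⟩
      exact h1.comp hgmeas
    have hpind : Pairwise (Function.onFun (IndepFun · · ℙ) fun l ω => g (Xs k l ω)) := by
      intro i j hij
      have h1 : IndepFun (fun ω => Xs k i ω) (fun ω => Xs k j ω) ℙ :=
        hindep.indepFun (show ((k, i) : Fin K × ℕ) ≠ (k, j) by simp [hij])
      exact h1.comp hgmeas hgmeas
    have hmapInt : Integrable g (Measure.map (Xs k 0) ℙ) := by
      rw [hlaw]
      rw [integrable_withDensity_iff (hp_meas k).ennreal_ofReal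
        (Eventually.of_forall fun x => ENNReal.ofReal_lt_top)]
      have heq : (fun x => g x * (ENNReal.ofReal (p k x)).toReal) = fun x => g x * p k x := by
        funext x
        rw [ENNReal.toReal_ofReal (hp_pos k x).le]
      rw [heq]
      exact Igp k
    have hintY : Integrable (fun ω => g (Xs k 0 ω)) ℙ :=
      (integrable_map_measure hmapInt.aestronglyMeasurable
        (hXmeas k 0).aemeasurable).mp hmapInt
    have hE : (∫ ω, g (Xs k 0 ω) ∂ℙ) = ∫ x, g x * p k x ∂μ := by
      have h1 : (∫ ω, g (Xs k 0 ω) ∂ℙ) = ∫ x, g x ∂(Measure.map (Xs k 0) ℙ) :=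
        (integral_map (hXmeas k 0).aemeasurable hmapInt.aestronglyMeasurable).symm
      rw [h1, hlaw]
      have h2 : (μ.withDensity fun x => ENNReal.ofReal (p k x))
          = μ.withDensity fun x => ((Real.toNNReal (p k x) : NNReal) : ENNReal) := rfl
      rw [h2, integral_withDensity_eq_integral_smul
        (show Measurable fun x => (p k x).toNNReal from measurable_real_toNNReal.comp (hp_meas k)) g]
      congr 1
      funext x
      rw [NNReal.smul_def, Real.coe_toNNReal _ (hp_pos k x).le, smul_eq_mul, mul_comm]
    have hslln := strong_law_ae (fun l ω => g (Xs k l ω)) hintY hpind hident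
    filter_upwards [hslln] with ω hω
    rw [← hE]
    simpa [smul_eq_mul] using hω
  have keyall : ∀ᵐ ω ∂(ℙ : Measure Ω), ∀ k : Fin K,
      Tendsto (fun m : ℕ => (m : ℝ)⁻¹ * ∑ l ∈ Finset.range m, g (Xs k l ω))
        atTop (nhds (∫ x, g x * p k x ∂μ)) := ae_all_iff.2 key
  filter_upwards [keyall] with ω hω
  have hLtot_pos : ∀ᶠ n in atTop, 1 ≤ Ltot n := by
    have hk0 : ∀ᶠ n in atTop, 1 ≤ Lk ⟨0, hK⟩ n := (hLk_top ⟨0, hK⟩).eventually_ge_atTop 1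
    filter_upwards [hk0] with n hn
    rw [hLtot n]
    calc 1 ≤ Lk ⟨0, hK⟩ n := hn
      _ ≤ ∑ k, Lk k n := Finset.single_le_sum (f := fun k => Lk k n)
          (fun k _ => Nat.zero_le _) (Finset.mem_univ (⟨0, hK⟩ : Fin K))
  set T : ℕ → ℝ := fun n => (1 / (Ltot n : ℝ)) *
      ∑ k, ∑ l ∈ Finset.range (Lk k n), g (Xs k l ω) with hTdef
  have hT : Tendsto T atTop (nhds (∑ k, lam k * ∫ x, g x * p k x ∂μ)) := by
    have hterm : ∀ k : Fin K, Tendsto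
        (fun n => (1 / (Ltot n : ℝ)) * ∑ l ∈ Finset.range (Lk k n), g (Xs k l ω))
        atTop (nhds (lam k * ∫ x, g x * p k x ∂μ)) := by
      intro k
      have h1 : Tendsto (fun n => ((Lk k n : ℝ) / (Ltot n : ℝ)) *
          ((Lk k n : ℝ)⁻¹ * ∑ l ∈ Finset.range (Lk k n), g (Xs k l ω)))
          atTop (nhds (lam k * ∫ x, g x * p k x ∂μ)) :=
        (hLk_ratio k).mul ((hω k).comp (hLk_top k))
      apply h1.congr'
      filter_upwards [(hLk_top k).eventually_ge_atTop 1, hLtot_pos] with n h1n h2n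
      have hLkn : (Lk k n : ℝ) ≠ 0 := Nat.cast_ne_zero.2 (by omega)
      have hLtn : (Ltot n : ℝ) ≠ 0 := Nat.cast_ne_zero.2 (by omega)
      field_simp
    have hsum := tendsto_finset_sum Finset.univ (fun k (_ : k ∈ Finset.univ) => hterm k)
    apply hsum.congr
    intro n
    exact (Finset.mul_sum _ _ _).symm
  apply aux_tendsto_of_rel hT
  intro ε hε
  set δ : ℝ := min (ε/2) (1/2) with hδdef
  have hδ0 : 0 < δ := lt_min (by linarith) (by norm_num)
  have hδhalf : δ ≤ 1/2 := min_le_right _ _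
  have hδε : 2*δ ≤ ε := by
    have := min_le_left (ε/2) (1/2)
    have : δ ≤ ε/2 := this
    linarith
  have hw : ∀ᶠ n in atTop, ∀ k' : Fin K,
      |((Lk k' n : ℝ)/(Ltot n : ℝ)) - lam k'| ≤ δ * lam k' := by
    rw [eventually_all]
    intro k'
    have hpos : 0 < δ * lam k' := mul_pos hδ0 (hlam k').1
    have hd := Metric.tendsto_nhds.mp (hLk_ratio k') _ hpos
    filter_upwards [hd] with n hn
    rw [Real.dist_eq] at hn
    exact hn.le
  filter_upwards [hw, hLtot_pos] with n hn hLt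
  -- notation
  set Dn : X → ℝ := fun x => ∑ k', ((Lk k' n : ℝ)/(Ltot n : ℝ)) * (1/c k') * p k' x with hDndef
  have hDn_low : ∀ x, (1-δ) * D x ≤ Dn x := by
    intro x
    rw [hDndef, hDdef]
    simp only
    rw [Finset.mul_sum]
    apply Finset.sum_le_sum
    intro k' _
    have hwk := abs_le.mp (hn k')
    have h1 : (1-δ) * lam k' ≤ (Lk k' n : ℝ)/(Ltot n : ℝ) := by nlinarith [hwk.1]
    have h2 : (0:ℝ) ≤ 1 / c k' := (one_div_pos.mpr (hc k')).le
    calc (1-δ) * (lam k' * p k' x / c k') = ((1-δ) * lam k') * (1/c k') * p k' x := by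
          field_simp
      _ ≤ ((Lk k' n : ℝ)/(Ltot n : ℝ)) * (1/c k') * p k' x := by
          apply mul_le_mul_of_nonneg_right (mul_le_mul_of_nonneg_right h1 h2) (hp_pos k' x).le
  have hDn_high : ∀ x, Dn x ≤ (1+δ) * D x := by
    intro x
    rw [hDndef, hDdef]
    simp only
    rw [Finset.mul_sum]
    apply Finset.sum_le_sum
    intro k' _
    have hwk := abs_le.mp (hn k')
    have h1 : (Lk k' n : ℝ)/(Ltot n : ℝ) ≤ (1+δ) * lam k' := by nlinarith [hwk.2]
    have h2 : (0:ℝ) ≤ 1 / c k' := (one_div_pos.mpr (hc k')).le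
    calc ((Lk k' n : ℝ)/(Ltot n : ℝ)) * (1/c k') * p k' x
        ≤ ((1+δ) * lam k') * (1/c k') * p k' x := by
          apply mul_le_mul_of_nonneg_right (mul_le_mul_of_nonneg_right h1 h2) (hp_pos k' x).le
      _ = (1+δ) * (lam k' * p k' x / c k') := by field_simp
  have hDn_pos : ∀ x, 0 < Dn x := by
    intro x
    have := hDn_low x
    nlinarith [hDpos x]
  -- termwise bounds
  have tb1 : ∀ x, (1-δ) * (h x / Dn x) ≤ g x := by
    intro x
    rw [hgdef]
    simp only
    rw [mul_div_assoc', div_le_div_iff₀ (hDn_pos x) (hDpos x)]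
    nlinarith [hDn_low x, hh_nonneg x, hDpos x]
  have tb2 : ∀ x, g x ≤ (1+δ) * (h x / Dn x) := by
    intro x
    rw [hgdef]
    simp only
    rw [mul_div_assoc', div_le_div_iff₀ (hDpos x) (hDn_pos x)]
    nlinarith [hDn_high x, hh_nonneg x, hDn_pos x]
  -- sums
  set Q : ℝ := ∑ k, ∑ l ∈ Finset.range (Lk k n), g (Xs k l ω) with hQdef
  set Sg : ℝ := ∑ k, ∑ l ∈ Finset.range (Lk k n), h (Xs k l ω) / Dn (Xs k l ω) with hSgdef
  have hs1 : (1-δ) * Sg ≤ Q := by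
    rw [hSgdef, hQdef, Finset.mul_sum]
    apply Finset.sum_le_sum
    intro k _
    rw [Finset.mul_sum]
    apply Finset.sum_le_sum
    intro l _
    exact tb1 _
  have hs2 : Q ≤ (1+δ) * Sg := by
    rw [hSgdef, hQdef, Finset.mul_sum]
    apply Finset.sum_le_sum
    intro k _
    rw [Finset.mul_sum]
    apply Finset.sum_le_sum
    intro l _
    exact tb2 _
  have hSgnonneg : 0 ≤ Sg := by
    rw [hSgdef]
    apply Finset.sum_nonneg
    intro k _
    apply Finset.sum_nonneg
    intro l _
    exact div_nonneg (hh_nonneg _) (hDn_pos _).le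
  have hQnonneg : 0 ≤ Q := by
    rw [hQdef]
    exact Finset.sum_nonneg fun k _ => Finset.sum_nonneg fun l _ => hgnonneg _
  have hSg2Q : Sg ≤ 2 * Q := by nlinarith
  have habsQ : |Sg - Q| ≤ ε * Q := by
    rw [abs_sub_le_iff]
    constructor
    · nlinarith
    · nlinarith
  -- conclude
  have hu : (0:ℝ) ≤ 1 / (Ltot n : ℝ) := by positivity
  have hTn : T n = (1 / (Ltot n : ℝ)) * Q := rfl
  have hSn : (1 / (Ltot n : ℝ)) *
      (∑ k, ∑ l ∈ Finset.range (Lk k n),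
        h (Xs k l ω) / (∑ k', ((Lk k' n : ℝ)/(Ltot n : ℝ)) * (1/c k') * p k' (Xs k l ω)))
      = (1 / (Ltot n : ℝ)) * Sg := rfl
  calc |(1 / (Ltot n : ℝ)) *
      (∑ k, ∑ l ∈ Finset.range (Lk k n),
        h (Xs k l ω) / (∑ k', ((Lk k' n : ℝ)/(Ltot n : ℝ)) * (1/c k') * p k' (Xs k l ω))) - T n|
      = (1 / (Ltot n : ℝ)) * |Sg - Q| := by
        rw [hSn, hTn, ← mul_sub, abs_mul, abs_of_nonneg hu]
    _ ≤ (1 / (Ltot n : ℝ)) * (ε * Q) := mul_le_mul_of_nonneg_left habsQ hu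
    _ = ε * |T n| := by
        rw [hTn, abs_of_nonneg (mul_nonneg hu hQnonneg)]
        ring
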